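/- Let κ > 0 and define g(τ) = ((1−τ)/2) · log(1 + κτ/(1−τ)) for τ ∈ [0,1). Then g is strictly concave on [0,1), g attains its maximum over [0,1) at a unique point τ* ∈ (0,1), and τ* is the unique solution in (0,1) of the first-order condition log(1 + κτ/(1−τ)) = κ/(1 + (κ−1)τ). -/

import Mathlib

open Real Set

namespace HTCaux

noncomputable def G (κ x : ℝ) : ℝ := (1 - x) / 2 * Real.log (1 + κ * x / (1 - x))
noncomputable def G1 (κ x : ℝ) : ℝ := (1 - x) / 2 * (Real.log (1 + (κ - 1) * x) - Real.log (1 - x))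
noncomputable def φ (κ x : ℝ) : ℝ :=
  (κ / (1 + (κ - 1) * x) - (Real.log (1 + (κ - 1) * x) - Real.log (1 - x))) / 2

lemma w_pos {κ x : ℝ} (hκ : 0 < κ) (h0 : 0 ≤ x) (h1 : x < 1) : 0 < 1 + (κ - 1) * x := by
  nlinarith

lemma G_eq_G1 {κ x : ℝ} (hκ : 0 < κ) (h0 : 0 ≤ x) (h1 : x < 1) : G κ x = G1 κ x := by
  have hx : (1 : ℝ) - x ≠ 0 := by linarith
  have hw : 0 < 1 + (κ - 1) * x := w_pos hκ h0 h1
  have harg : 1 + κ * x / (1 - x) = (1 + (κ - 1) * x) / (1 - x) := by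
    field_simp; ring
  rw [G, G1, harg, Real.log_div hw.ne' hx]

lemma hasDerivAt_G1 {κ x : ℝ} (hw : 0 < 1 + (κ - 1) * x) (h1 : x < 1) :
    HasDerivAt (G1 κ) (φ κ x) x := by
  have hx : 0 < (1 : ℝ) - x := by linarith
  have hwd : HasDerivAt (fun y : ℝ => 1 + (κ - 1) * y) (κ - 1) x := by
    simpa using ((hasDerivAt_id x).const_mul (κ - 1)).const_add 1
  have hxd : HasDerivAt (fun y : ℝ => 1 - y) (-1) x := by
    simpa using (hasDerivAt_id x).const_sub 1
  have hlogw : HasDerivAt (fun y : ℝ => Real.log (1 + (κ - 1) * y))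
      ((κ - 1) / (1 + (κ - 1) * x)) x := hwd.log hw.ne'
  have hlogx : HasDerivAt (fun y : ℝ => Real.log (1 - y)) (-1 / (1 - x)) x := hxd.log hx.ne'
  have h := (hxd.div_const 2).mul (hlogw.sub hlogx)
  refine (h : HasDerivAt (G1 κ) _ x).congr_deriv ?_
  simp only [φ, Pi.sub_apply]
  field_simp
  ring

lemma hasDerivAt_φ {κ x : ℝ} (hw : 0 < 1 + (κ - 1) * x) (h1 : x < 1) :
    HasDerivAt (φ κ) (-(κ ^ 2) / (2 * (1 - x) * (1 + (κ - 1) * x) ^ 2)) x := by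
  have hx : 0 < (1 : ℝ) - x := by linarith
  have hwd : HasDerivAt (fun y : ℝ => 1 + (κ - 1) * y) (κ - 1) x := by
    simpa using ((hasDerivAt_id x).const_mul (κ - 1)).const_add 1
  have hxd : HasDerivAt (fun y : ℝ => 1 - y) (-1) x := by
    simpa using (hasDerivAt_id x).const_sub 1
  have hlogw : HasDerivAt (fun y : ℝ => Real.log (1 + (κ - 1) * y))
      ((κ - 1) / (1 + (κ - 1) * x)) x := hwd.log hw.ne'
  have hlogx : HasDerivAt (fun y : ℝ => Real.log (1 - y)) (-1 / (1 - x)) x := hxd.log hx.ne'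
  have hdiv : HasDerivAt (fun y : ℝ => κ / (1 + (κ - 1) * y))
      ((0 * (1 + (κ - 1) * x) - κ * (κ - 1)) / (1 + (κ - 1) * x) ^ 2) x :=
    (hasDerivAt_const x κ).div hwd hw.ne'
  have h := ((hdiv.sub (hlogw.sub hlogx)).div_const 2)
  refine (h : HasDerivAt (φ κ) _ x).congr_deriv ?_
  field_simp
  ring

end HTCaux

namespace HTCaux

lemma ψ_neg {κ x : ℝ} (hκ : 0 < κ) (h0 : 0 ≤ x) (h1 : x < 1) :
    -(κ ^ 2) / (2 * (1 - x) * (1 + (κ - 1) * x) ^ 2) < 0 := by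
  have hw := w_pos hκ h0 h1
  have hx : 0 < (1:ℝ) - x := by linarith
  apply div_neg_of_neg_of_pos
  · nlinarith
  · positivity

lemma continuousOn_w (κ : ℝ) : ContinuousOn (fun x : ℝ => 1 + (κ - 1) * x) (Ico 0 1) :=
  (continuous_const.add (continuous_const.mul continuous_id)).continuousOn

lemma continuousOn_logw {κ : ℝ} (hκ : 0 < κ) :
    ContinuousOn (fun x : ℝ => Real.log (1 + (κ - 1) * x)) (Ico 0 1) :=
  (continuousOn_w κ).log (fun x hx => (w_pos hκ hx.1 hx.2).ne')

lemma continuousOn_log1x :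
    ContinuousOn (fun x : ℝ => Real.log (1 - x)) (Ico (0:ℝ) 1) :=
  ((continuous_const.sub continuous_id).continuousOn).log
    (fun x hx => by
      have h : (0:ℝ) < 1 - x := by linarith [hx.2]
      exact h.ne')

lemma continuousOn_G1 {κ : ℝ} (hκ : 0 < κ) : ContinuousOn (G1 κ) (Ico 0 1) :=
  ((continuous_const.sub continuous_id).div_const 2).continuousOn.mul
    ((continuousOn_logw hκ).sub continuousOn_log1x)

lemma continuousOn_φ {κ : ℝ} (hκ : 0 < κ) : ContinuousOn (φ κ) (Ico 0 1) :=
  ((continuousOn_const.div (continuousOn_w κ)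
      (fun x hx => (w_pos hκ hx.1 hx.2).ne')).sub
    ((continuousOn_logw hκ).sub continuousOn_log1x)).div_const 2

lemma log_arg {κ x : ℝ} (hκ : 0 < κ) (h0 : 0 ≤ x) (h1 : x < 1) :
    Real.log (1 + κ * x / (1 - x)) = Real.log (1 + (κ - 1) * x) - Real.log (1 - x) := by
  have hx : (1 : ℝ) - x ≠ 0 := by linarith
  have hw := w_pos hκ h0 h1
  have harg : 1 + κ * x / (1 - x) = (1 + (κ - 1) * x) / (1 - x) := by
    field_simp; ring
  rw [harg, Real.log_div hw.ne' hx]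

end HTCaux
/-- The upper-bound throughput `g(τ) = ((1−τ)/2)·log(1 + κτ/(1−τ))` of the
harvest-then-cooperate protocol is strictly concave on `[0,1)`, attains its maximum over
`[0,1)` at a unique point `τ* ∈ (0,1)`, and `τ*` is the unique solution in `(0,1)` of the
first-order condition `log(1 + κτ/(1−τ)) = κ/(1 + (κ−1)τ)`. -/
theorem optimal_time_split (κ : ℝ) (hκ : 0 < κ)
    (g : ℝ → ℝ) (hg : ∀ τ, g τ = (1 - τ) / 2 * Real.log (1 + κ * τ / (1 - τ))) :
    StrictConcaveOn ℝ (Set.Ico (0:ℝ) 1) g ∧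
    ∃ τs ∈ Set.Ioo (0:ℝ) 1,
      IsMaxOn g (Set.Ico (0:ℝ) 1) τs ∧
      (∀ τ' ∈ Set.Ico (0:ℝ) 1, IsMaxOn g (Set.Ico (0:ℝ) 1) τ' → τ' = τs) ∧
      Real.log (1 + κ * τs / (1 - τs)) = κ / (1 + (κ - 1) * τs) ∧
      (∀ τ' ∈ Set.Ioo (0:ℝ) 1,
        Real.log (1 + κ * τ' / (1 - τ')) = κ / (1 + (κ - 1) * τ') → τ' = τs) := by
  have hgG : Set.EqOn g (HTCaux.G1 κ) (Set.Ico 0 1) := by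
    intro τ hτ
    rw [hg]
    exact HTCaux.G_eq_G1 hκ hτ.1 hτ.2
  have hcont : ContinuousOn g (Set.Ico (0:ℝ) 1) :=
    (HTCaux.continuousOn_G1 hκ).congr hgG
  have hderiv : ∀ x ∈ Set.Ioo (0:ℝ) 1, HasDerivAt g (HTCaux.φ κ x) x := by
    intro x hx
    have h1 := HTCaux.hasDerivAt_G1 (HTCaux.w_pos hκ hx.1.le hx.2) hx.2
    apply h1.congr_of_eventuallyEq
    filter_upwards [Ioo_mem_nhds hx.1 hx.2] with y hy
    exact hgG (Set.Ioo_subset_Ico_self hy)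
  have hφanti : StrictAntiOn (HTCaux.φ κ) (Set.Ico (0:ℝ) 1) := by
    apply strictAntiOn_of_deriv_neg (convex_Ico 0 1) (HTCaux.continuousOn_φ hκ)
    intro x hx
    rw [interior_Ico] at hx
    rw [(HTCaux.hasDerivAt_φ (HTCaux.w_pos hκ hx.1.le hx.2) hx.2).deriv]
    exact HTCaux.ψ_neg hκ hx.1.le hx.2
  have hconc : StrictConcaveOn ℝ (Set.Ico (0:ℝ) 1) g := by
    apply StrictAntiOn.strictConcaveOn_of_deriv (convex_Ico 0 1) hcont
    rw [interior_Ico]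
    intro a ha b hb hab
    rw [(hderiv a ha).deriv, (hderiv b hb).deriv]
    exact hφanti (Set.Ioo_subset_Ico_self ha) (Set.Ioo_subset_Ico_self hb) hab
  refine ⟨hconc, ?_⟩
  -- find the root of φ
  set m : ℝ := min 1 κ with hm_def
  have hm : 0 < m := lt_min one_pos hκ
  have hm1 : m ≤ 1 := min_le_left _ _
  set C : ℝ := κ / m - Real.log m + 1 with hC_def
  have hlogm : Real.log m ≤ 0 := Real.log_nonpos hm.le hm1
  have hC : 0 < C := by
    have : 0 < κ / m := div_pos hκ hm
    simp only [hC_def]; linarith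
  set b : ℝ := 1 - Real.exp (-C) with hb_def
  have hexp1 : Real.exp (-C) < 1 := by
    rw [Real.exp_lt_one_iff]; linarith
  have hb0 : 0 < b := by simp only [hb_def]; linarith
  have hb1 : b < 1 := by
    have := Real.exp_pos (-C); simp only [hb_def]; linarith
  have hφ0 : HTCaux.φ κ 0 = κ / 2 := by simp [HTCaux.φ]
  have hφb : HTCaux.φ κ b < 0 := by
    have hwb : m ≤ 1 + (κ - 1) * b := by
      have h1 := min_le_left 1 κ
      have h2 := min_le_right 1 κ
      nlinarith
    have hwb0 : 0 < 1 + (κ - 1) * b := lt_of_lt_of_le hm hwb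
    have hlogw : Real.log m ≤ Real.log (1 + (κ - 1) * b) :=
      Real.log_le_log hm hwb
    have hdivle : κ / (1 + (κ - 1) * b) ≤ κ / m :=
      div_le_div_of_nonneg_left hκ.le hm hwb
    have hlog1b : Real.log (1 - b) = -C := by
      simp only [hb_def]; rw [sub_sub_cancel, Real.log_exp]
    have : HTCaux.φ κ b ≤ (κ / m - Real.log m - C) / 2 := by
      simp only [HTCaux.φ, hlog1b]
      apply div_le_div_of_nonneg_right ?_ ?_ |>.trans_eq rfl
      · linarith
      · norm_num
    simp only [hC_def] at this
    linarith
  have hφcont : ContinuousOn (HTCaux.φ κ) (Set.Icc 0 b) :=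
    (HTCaux.continuousOn_φ hκ).mono (fun x hx => ⟨hx.1, lt_of_le_of_lt hx.2 hb1⟩)
  have hroot : ∃ τs ∈ Set.Ioo (0:ℝ) b, HTCaux.φ κ τs = 0 := by
    have h0mem : (0:ℝ) ∈ Set.Ioo (HTCaux.φ κ b) (HTCaux.φ κ 0) := by
      constructor
      · exact hφb
      · rw [hφ0]; positivity
    have := intermediate_value_Ioo' hb0.le hφcont h0mem
    obtain ⟨τs, hτs, hτseq⟩ := this
    exact ⟨τs, hτs, hτseq⟩
  obtain ⟨τs, hτsb, hφτs⟩ := hroot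
  have hτs : τs ∈ Set.Ioo (0:ℝ) 1 := ⟨hτsb.1, hτsb.2.trans hb1⟩
  have hτsIco : τs ∈ Set.Ico (0:ℝ) 1 := ⟨hτs.1.le, hτs.2⟩
  -- FOC equivalence
  have hfoc_iff : ∀ x ∈ Set.Ico (0:ℝ) 1,
      (Real.log (1 + κ * x / (1 - x)) = κ / (1 + (κ - 1) * x) ↔ HTCaux.φ κ x = 0) := by
    intro x hx
    rw [HTCaux.log_arg hκ hx.1 hx.2]
    simp only [HTCaux.φ]
    constructor
    · intro h; rw [h]; ring
    · intro h
      have := (div_eq_zero_iff.mp h).resolve_right (by norm_num)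
      linarith
  have hfoc : Real.log (1 + κ * τs / (1 - τs)) = κ / (1 + (κ - 1) * τs) :=
    (hfoc_iff τs hτsIco).mpr hφτs
  -- monotonicity pieces
  have hmono : StrictMonoOn g (Set.Icc 0 τs) := by
    apply strictMonoOn_of_deriv_pos (convex_Icc 0 τs)
      (hcont.mono (fun x hx => ⟨hx.1, lt_of_le_of_lt hx.2 hτs.2⟩))
    intro x hx
    rw [interior_Icc] at hx
    have hx' : x ∈ Set.Ioo (0:ℝ) 1 := ⟨hx.1, hx.2.trans hτs.2⟩
    rw [(hderiv x hx').deriv]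
    have := hφanti (Set.Ioo_subset_Ico_self hx') hτsIco hx.2
    linarith [hφτs ▸ this]
  have hanti : StrictAntiOn g (Set.Ico τs 1) := by
    apply strictAntiOn_of_deriv_neg (convex_Ico τs 1)
      (hcont.mono (fun x hx => ⟨hτs.1.le.trans hx.1, hx.2⟩))
    intro x hx
    rw [interior_Ico] at hx
    have hx' : x ∈ Set.Ioo (0:ℝ) 1 := ⟨hτs.1.trans hx.1, hx.2⟩
    rw [(hderiv x hx').deriv]
    have := hφanti hτsIco (Set.Ioo_subset_Ico_self hx') hx.1
    rw [hφτs] at this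
    linarith
  have hlt : ∀ τ ∈ Set.Ico (0:ℝ) 1, τ ≠ τs → g τ < g τs := by
    intro τ hτ hne
    rcases lt_or_gt_of_ne hne with h | h
    · exact hmono ⟨hτ.1, h.le⟩ ⟨hτs.1.le, le_rfl⟩ h
    · exact hanti ⟨le_rfl, hτs.2⟩ ⟨h.le, hτ.2⟩ h
  have hmax : IsMaxOn g (Set.Ico (0:ℝ) 1) τs := by
    intro τ hτ
    by_cases hne : τ = τs
    · simp [hne]
    · exact (hlt τ hτ hne).le
  refine ⟨τs, hτs, hmax, ?_, hfoc, ?_⟩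
  · intro τ' hτ' hmax'
    by_contra hne
    have h1 : g τ' < g τs := hlt τ' hτ' hne
    have h2 : g τs ≤ g τ' := hmax' hτsIco
    linarith
  · intro τ' hτ' hfoc'
    have hφτ' : HTCaux.φ κ τ' = 0 :=
      (hfoc_iff τ' ⟨hτ'.1.le, hτ'.2⟩).mp hfoc'
    exact hφanti.injOn ⟨hτ'.1.le, hτ'.2⟩ hτsIco (hφτ'.trans hφτs.symm)
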